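/- For every M > 0 and every d ≥ 3, there exists a finite (d-1)-balanced set X of unit vectors in R^d with u*(X) ≥ √M. Consequently u**(d, d-1) = ∞ for d ≥ 3. -/

import Mathlib

open scoped RealInnerProductSpace

/-- A finite set `X` of unit vectors of `ℝ^d` is `b`-balanced if the origin belongs to a face
(extreme subset) of `conv X` of dimension `b`, but to no face of smaller dimension. -/
def IsBBalanced (d b : ℕ) (X : Finset (EuclideanSpace ℝ (Fin d))) : Prop :=
  (∃ F : Set (EuclideanSpace ℝ (Fin d)),
      IsExtreme ℝ (convexHull ℝ (X : Set (EuclideanSpace ℝ (Fin d)))) F ∧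
      (0 : EuclideanSpace ℝ (Fin d)) ∈ F ∧ Module.finrank ℝ (vectorSpan ℝ F) = b) ∧
  (∀ F : Set (EuclideanSpace ℝ (Fin d)),
      IsExtreme ℝ (convexHull ℝ (X : Set (EuclideanSpace ℝ (Fin d)))) F →
      (0 : EuclideanSpace ℝ (Fin d)) ∈ F → b ≤ Module.finrank ℝ (vectorSpan ℝ F))

/-- coordinate linear functional on EuclideanSpace -/
def coordLM (d : ℕ) (i : Fin d) : EuclideanSpace ℝ (Fin d) →ₗ[ℝ] ℝ where
  toFun x := x i
  map_add' _ _ := rfl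
  map_smul' _ _ := rfl

lemma coordLM_apply (d : ℕ) (i : Fin d) (x : EuclideanSpace ℝ (Fin d)) :
    coordLM d i x = x i := rfl

lemma extreme_ker (d : ℕ) (S : Set (EuclideanSpace ℝ (Fin d)))
    (f : EuclideanSpace ℝ (Fin d) →ₗ[ℝ] ℝ) (hf : ∀ x ∈ S, 0 ≤ f x) :
    IsExtreme ℝ (convexHull ℝ S) {x | x ∈ convexHull ℝ S ∧ f x = 0} := by
  have hnn : ∀ x ∈ convexHull ℝ S, 0 ≤ f x := by
    intro x hx
    have hsub : convexHull ℝ S ⊆ {x | 0 ≤ f x} :=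
      convexHull_min hf ((convex_Ici (0:ℝ)).linear_preimage f)
    exact hsub hx
  constructor
  · intro x hx; exact hx.1
  · rintro x1 h1 x2 h2 x ⟨hxc, hx0⟩ ⟨a, b, ha, hb, hab, hx⟩
    have e1 := hnn x1 h1
    have e2 := hnn x2 h2
    have hsum : a * f x1 + b * f x2 = 0 := by
      have h := congrArg f hx
      rw [map_add, map_smul, map_smul] at h
      simpa [smul_eq_mul, hx0] using h
    have hf1 : f x1 = 0 := by nlinarith
    have hf2 : f x2 = 0 := by nlinarith
    exact ⟨h1, hf1⟩

lemma repr_sum (d : ℕ) (x : EuclideanSpace ℝ (Fin d)) :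
    x = ∑ j : Fin d, x j • EuclideanSpace.single j (1:ℝ) := by
  have h := (EuclideanSpace.basisFun (Fin d) ℝ).sum_repr x
  simp only [EuclideanSpace.basisFun_repr, EuclideanSpace.basisFun_apply] at h
  exact h.symm

lemma mem_span_singles (d : ℕ) (iD : Fin d) (x : EuclideanSpace ℝ (Fin d)) (hx : x iD = 0) :
    x ∈ Submodule.span ℝ
      {v : EuclideanSpace ℝ (Fin d) | ∃ j, j ≠ iD ∧ v = EuclideanSpace.single j (1:ℝ)} := by
  rw [repr_sum d x]
  refine Submodule.sum_mem _ (fun j _ => ?_)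
  by_cases h : j = iD
  · subst h; rw [hx]; simp
  · exact Submodule.smul_mem _ _ (Submodule.subset_span ⟨j, h, rfl⟩)

lemma finrank_ker_coord (d : ℕ) (hd : 0 < d) (iD : Fin d) :
    Module.finrank ℝ (LinearMap.ker (coordLM d iD)) = d - 1 := by
  have hsurj : LinearMap.range (coordLM d iD) = ⊤ := by
    rw [LinearMap.range_eq_top]
    intro a
    exact ⟨EuclideanSpace.single iD a, by simp [coordLM_apply, EuclideanSpace.single_apply]⟩
  have h := LinearMap.finrank_range_add_finrank_ker (coordLM d iD)
  rw [hsurj, finrank_top] at h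
  simp only [finrank_euclideanSpace_fin, Module.finrank_self] at h
  omega

set_option maxHeartbeats 3000000 in
theorem stmt16 (M : ℝ) (hM : 0 < M) (d : ℕ) (hd : 3 ≤ d) :
    ∃ X : Finset (EuclideanSpace ℝ (Fin d)),
      (∀ x ∈ X, ‖x‖ = 1) ∧
      IsBBalanced d (d - 1) X ∧
      ∃ u : ℕ → EuclideanSpace ℝ (Fin d),
        u 0 = 0 ∧
        (∀ i, ∃ χ ∈ X, (∀ x ∈ X, ⟪χ, u i⟫ ≤ ⟪x, u i⟫) ∧ u (i + 1) = u i + χ) ∧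
        ∃ i, Real.sqrt M ≤ ‖u i‖ := by
  classical
  -- indices
  obtain ⟨i0, i1, iD, h01, h0D, h1D⟩ : ∃ i0 i1 iD : Fin d, i0 ≠ i1 ∧ i0 ≠ iD ∧ i1 ≠ iD :=
    ⟨⟨0, by omega⟩, ⟨1, by omega⟩, ⟨2, by omega⟩, by simp [Fin.ext_iff],
      by simp [Fin.ext_iff], by simp [Fin.ext_iff]⟩
  -- scalar parameters
  obtain ⟨n, hn10, hnM⟩ : ∃ n : ℕ, (10:ℝ) ≤ n ∧ 10 * Real.sqrt M ≤ n := by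
    refine ⟨10 + ⌈10 * Real.sqrt M⌉₊, ?_, ?_⟩
    · push_cast
      have h0 : (0:ℝ) ≤ (⌈10 * Real.sqrt M⌉₊ : ℝ) := by positivity
      linarith
    · push_cast
      have := Nat.le_ceil (10 * Real.sqrt M); linarith
  obtain ⟨c, s, hs0, hc1, hc99, hcs, hI, hII, hM'⟩ :
      ∃ c s : ℝ, 0 < s ∧ c ≤ 1 ∧ (99/100:ℝ) ≤ c ∧ c^2 + s^2 = 1 ∧
        s * (4/5 + (n:ℝ)^2 * s) ≤ (c - 3/5) * (3/5) ∧
        ((n:ℝ)^2 - 1) * (1 - c) ≤ c - 3/5 ∧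
        Real.sqrt M ≤ 4/5 + (n:ℝ)^2 * s := by
    set t : ℝ := (n:ℝ) with htdef
    have hD0 : (0:ℝ) < 100 * t^2 + 1 := by positivity
    have ht0 : (0:ℝ) < t := by linarith
    have hs5 : 20 * t/(100 * t^2 + 1) ≤ 1/(5*t) := by
      rw [div_le_div_iff₀ hD0 (by positivity)]; nlinarith
    have h550 : (1:ℝ)/(5*t) ≤ 1/50 := by
      rw [div_le_div_iff₀ (by positivity) (by norm_num)]; linarith
    have hc99' : (99/100:ℝ) ≤ (100 * t^2 - 1)/(100 * t^2 + 1) := by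
      rw [le_div_iff₀ hD0]; nlinarith
    have hs0' : (0:ℝ) < 20 * t/(100 * t^2 + 1) := by positivity
    have h1 : t^2 * (20 * t/(100 * t^2 + 1)) ≤ t/5 := by
      rw [mul_div_assoc', div_le_div_iff₀ hD0 (by norm_num)]; nlinarith
    have h2 : t/10 ≤ t^2 * (20 * t/(100 * t^2 + 1)) := by
      rw [mul_div_assoc', le_div_iff₀ hD0]; nlinarith
    refine ⟨(100 * t^2 - 1)/(100 * t^2 + 1), 20 * t/(100 * t^2 + 1), hs0', ?_, hc99', ?_, ?_, ?_, ?_⟩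
    · rw [div_le_one hD0]; linarith
    · field_simp; ring
    · have hs50 : 20 * t/(100 * t^2 + 1) ≤ 1/50 := le_trans hs5 h550
      have hq : 20 * t/(100 * t^2 + 1) * (t^2 * (20 * t/(100 * t^2 + 1))) ≤ 1/(5*t) * (t/5) :=
        mul_le_mul hs5 h1 (by positivity) (by positivity)
      have hq2 : 1/(5*t) * (t/5) = 1/25 := by field_simp; ring
      nlinarith [hs0'.le, mul_le_mul_of_nonneg_right hs50 (by norm_num : (0:ℝ) ≤ 4/5)]
    · have heq : 1 - (100 * t^2 - 1)/(100 * t^2 + 1) = 2/(100*t^2+1) := by field_simp; ring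
      rw [heq]
      have h3 : (t^2 - 1) * (2/(100*t^2+1)) ≤ 1/50 := by
        rw [mul_div_assoc', div_le_div_iff₀ hD0 (by norm_num)]; nlinarith
      linarith
    · linarith [Real.sqrt_nonneg M]
  -- vectors
  set e : Fin d → EuclideanSpace ℝ (Fin d) := fun j => EuclideanSpace.single j 1 with he
  set p : EuclideanSpace ℝ (Fin d) := e i0 with hp
  set q : EuclideanSpace ℝ (Fin d) := e iD with hq
  set np : EuclideanSpace ℝ (Fin d) := (-(3/5) : ℝ) • e i0 + ((4/5 : ℝ)) • e i1 with hnp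
  set nm : EuclideanSpace ℝ (Fin d) := (-(3/5) : ℝ) • e i0 + ((-(4/5) : ℝ)) • e i1 with hnm
  set xt : EuclideanSpace ℝ (Fin d) := (-c) • e i0 + s • e iD with hxt
  set x0 : EuclideanSpace ℝ (Fin d) := ((3/5 : ℝ)) • e i0 + ((4/5 : ℝ)) • e iD with hx0
  set J : Finset (Fin d) := Finset.univ.filter (fun j => j ≠ i0 ∧ j ≠ iD) with hJ
  set X : Finset (EuclideanSpace ℝ (Fin d)) :=
    ({p, np, nm, xt, x0} : Finset (EuclideanSpace ℝ (Fin d))) ∪ J.image e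
      ∪ J.image (fun j => -e j) with hX
  have hmemX : ∀ x, x ∈ X ↔ (x = p ∨ x = np ∨ x = nm ∨ x = xt ∨ x = x0 ∨
      (∃ j, (j ≠ i0 ∧ j ≠ iD) ∧ x = e j) ∨ (∃ j, (j ≠ i0 ∧ j ≠ iD) ∧ x = -e j)) := by
    intro x
    simp only [hX, Finset.mem_union, Finset.mem_insert, Finset.mem_singleton, Finset.mem_image,
      hJ, Finset.mem_filter, Finset.mem_univ, true_and]
    constructor
    · rintro (((h | h | h | h | h) | ⟨j, hj, rfl⟩) | ⟨j, hj, rfl⟩)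
      · exact Or.inl h
      · exact Or.inr (Or.inl h)
      · exact Or.inr (Or.inr (Or.inl h))
      · exact Or.inr (Or.inr (Or.inr (Or.inl h)))
      · exact Or.inr (Or.inr (Or.inr (Or.inr (Or.inl h))))
      · exact Or.inr (Or.inr (Or.inr (Or.inr (Or.inr (Or.inl ⟨j, hj, rfl⟩)))))
      · exact Or.inr (Or.inr (Or.inr (Or.inr (Or.inr (Or.inr ⟨j, hj, rfl⟩)))))
    · rintro (h | h | h | h | h | ⟨j, hj, rfl⟩ | ⟨j, hj, rfl⟩)
      · exact Or.inl (Or.inl (Or.inl h))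
      · exact Or.inl (Or.inl (Or.inr (Or.inl h)))
      · exact Or.inl (Or.inl (Or.inr (Or.inr (Or.inl h))))
      · exact Or.inl (Or.inl (Or.inr (Or.inr (Or.inr (Or.inl h)))))
      · exact Or.inl (Or.inl (Or.inr (Or.inr (Or.inr (Or.inr h)))))
      · exact Or.inl (Or.inr ⟨j, hj, rfl⟩)
      · exact Or.inr ⟨j, hj, rfl⟩
  -- memberships
  have hpX : p ∈ X := (hmemX p).2 (Or.inl rfl)
  have hnpX : np ∈ X := (hmemX np).2 (by tauto)
  have hnmX : nm ∈ X := (hmemX nm).2 (by tauto)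
  have hxtX : xt ∈ X := (hmemX xt).2 (by tauto)
  have hx0X : x0 ∈ X := (hmemX x0).2 (by tauto)
  have heX : ∀ j : Fin d, j ≠ i0 → j ≠ iD → e j ∈ X := fun j h1 h2 =>
    (hmemX (e j)).2 (Or.inr (Or.inr (Or.inr (Or.inr (Or.inr (Or.inl ⟨j, ⟨h1, h2⟩, rfl⟩))))))
  have henX : ∀ j : Fin d, j ≠ i0 → j ≠ iD → -e j ∈ X := fun j h1 h2 =>
    (hmemX (-e j)).2 (Or.inr (Or.inr (Or.inr (Or.inr (Or.inr (Or.inr ⟨j, ⟨h1, h2⟩, rfl⟩))))))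
  -- coordinates and inner products
  have hea : ∀ (j i : Fin d), (e j) i = if i = j then (1:ℝ) else 0 := by
    intro j i; rw [he]; exact EuclideanSpace.single_apply j 1 i
  have hip : ∀ (j : Fin d) (w : EuclideanSpace ℝ (Fin d)), ⟪e j, w⟫ = w j := by
    intro j w; rw [he]; simp [EuclideanSpace.inner_single_left]
  have hip2 : ∀ (a b : ℝ) (i j : Fin d) (w : EuclideanSpace ℝ (Fin d)),
      ⟪a • e i + b • e j, w⟫ = a * w i + b * w j := by
    intro a b i j w
    rw [inner_add_left, real_inner_smul_left, real_inner_smul_left, hip, hip]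
  have hco2 : ∀ (a b : ℝ) (i j k : Fin d),
      (a • e i + b • e j) k = a * (if k = i then (1:ℝ) else 0) + b * (if k = j then (1:ℝ) else 0) := by
    intro a b i j k
    have h1 : (a • e i + b • e j) k = a * (e i k) + b * (e j k) := rfl
    rw [h1, hea, hea]
  -- norms
  have hnorm1 : ∀ w : EuclideanSpace ℝ (Fin d), ⟪w, w⟫ = 1 → ‖w‖ = 1 := by
    intro w hw
    have h := real_inner_self_eq_norm_mul_norm w
    nlinarith [norm_nonneg w]
  have hunit : ∀ x ∈ X, ‖x‖ = 1 := by
    intro x hx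
    have hej : ∀ j : Fin d, ‖e j‖ = 1 := by
      intro j; refine hnorm1 _ ?_
      rw [hip, hea]; simp
    rcases (hmemX x).1 hx with rfl | rfl | rfl | rfl | rfl | ⟨j, hj, rfl⟩ | ⟨j, hj, rfl⟩
    · rw [hp]; exact hej i0
    · refine hnorm1 _ ?_
      rw [hnp, hip2, hco2, hco2]
      simp only [if_pos rfl, if_neg h01, if_neg (Ne.symm h01)]
      norm_num
    · refine hnorm1 _ ?_
      rw [hnm, hip2, hco2, hco2]
      simp only [if_pos rfl, if_neg h01, if_neg (Ne.symm h01)]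
      norm_num
    · refine hnorm1 _ ?_
      rw [hxt, hip2, hco2, hco2]
      simp [if_neg h0D, if_neg (Ne.symm h0D)]
      nlinarith [hcs]
    · refine hnorm1 _ ?_
      rw [hx0, hip2, hco2, hco2]
      simp only [if_pos rfl, if_neg h0D, if_neg (Ne.symm h0D)]
      norm_num
    · exact hej j
    · rw [norm_neg]; exact hej j
  -- convex hull facts
  have hconvX : ∀ x ∈ X, x ∈ convexHull ℝ (X : Set (EuclideanSpace ℝ (Fin d))) := by
    intro x hx; exact subset_convexHull ℝ _ hx
  set zz : EuclideanSpace ℝ (Fin d) := (-(3/5) : ℝ) • e i0 with hzz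
  have hzzconv : zz ∈ convexHull ℝ (X : Set (EuclideanSpace ℝ (Fin d))) := by
    have h := (convex_convexHull ℝ (X : Set (EuclideanSpace ℝ (Fin d))))
      (hconvX np hnpX) (hconvX nm hnmX)
      (by norm_num : (0:ℝ) ≤ 1/2) (by norm_num : (0:ℝ) ≤ 1/2) (by norm_num)
    have heq : (1/2 : ℝ) • np + (1/2 : ℝ) • nm = zz := by
      rw [hnp, hnm, hzz]; module
    rwa [heq] at h
  have h0seg : (0 : EuclideanSpace ℝ (Fin d)) ∈ openSegment ℝ p zz := by
    refine ⟨3/8, 5/8, by norm_num, by norm_num, by norm_num, ?_⟩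
    rw [hp, hzz]; module
  have h0conv : (0 : EuclideanSpace ℝ (Fin d)) ∈
      convexHull ℝ (X : Set (EuclideanSpace ℝ (Fin d))) := by
    have h := (convex_convexHull ℝ (X : Set (EuclideanSpace ℝ (Fin d))))
      (hconvX p hpX) hzzconv (by norm_num : (0:ℝ) ≤ 3/8) (by norm_num : (0:ℝ) ≤ 5/8) (by norm_num)
    have heq : (3/8 : ℝ) • p + (5/8 : ℝ) • zz = 0 := by rw [hp, hzz]; module
    rwa [heq] at h
  -- the functional
  set f : EuclideanSpace ℝ (Fin d) →ₗ[ℝ] ℝ := coordLM d iD with hf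
  have hfapp : ∀ x : EuclideanSpace ℝ (Fin d), f x = x iD := fun x => rfl
  have hfX : ∀ x ∈ (X : Set (EuclideanSpace ℝ (Fin d))), 0 ≤ f x := by
    intro x hx
    rcases (hmemX x).1 hx with rfl | rfl | rfl | rfl | rfl | ⟨j, hj, rfl⟩ | ⟨j, hj, rfl⟩
    · rw [hfapp, hp, hea, if_neg (Ne.symm h0D)]
    · rw [hfapp, hnp, hco2, if_neg (Ne.symm h0D), if_neg (Ne.symm h1D)]; norm_num
    · rw [hfapp, hnm, hco2, if_neg (Ne.symm h0D), if_neg (Ne.symm h1D)]; norm_num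
    · rw [hfapp, hxt, hco2, if_neg (Ne.symm h0D), if_pos rfl]; nlinarith
    · rw [hfapp, hx0, hco2, if_neg (Ne.symm h0D), if_pos rfl]; norm_num
    · rw [hfapp, hea, if_neg (fun h => hj.2 h.symm)]
    · have : (-e j) iD = -((e j) iD) := rfl
      rw [hfapp, this, hea, if_neg (fun h => hj.2 h.symm)]; norm_num
  -- key: every face containing 0 has vectorSpan ⊇ ker f
  have hvspan : ∀ F' : Set (EuclideanSpace ℝ (Fin d)),
      IsExtreme ℝ (convexHull ℝ (X : Set (EuclideanSpace ℝ (Fin d)))) F' →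
      (0 : EuclideanSpace ℝ (Fin d)) ∈ F' → LinearMap.ker f ≤ vectorSpan ℝ F' := by
    intro F' hext h0F'
    intro x hxk
    have hx0 : x iD = 0 := by
      have h := LinearMap.mem_ker.1 hxk
      rwa [hfapp] at h
    have hsp := mem_span_singles d iD x hx0
    refine Submodule.span_le.2 ?_ hsp
    rintro v ⟨j, hjD, rfl⟩
    have hsingle : EuclideanSpace.single j (1:ℝ) = e j := by rw [he]
    rw [hsingle]
    have hmemvs : ∀ y : EuclideanSpace ℝ (Fin d), y ∈ F' → y ∈ (vectorSpan ℝ F' : Set _) := by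
      intro y hy
      have h := vsub_mem_vectorSpan ℝ hy h0F'
      rwa [vsub_eq_sub, sub_zero] at h
    by_cases hj0 : j = i0
    · subst hj0
      have hmem := hext.2 (hconvX p hpX) hzzconv h0F' h0seg
      have := hmemvs p hmem
      rwa [hp] at this
    · have hseg : (0 : EuclideanSpace ℝ (Fin d)) ∈ openSegment ℝ (e j) (-e j) :=
        ⟨1/2, 1/2, by norm_num, by norm_num, by norm_num, by module⟩
      have hmem := hext.2 (hconvX _ (heX j hj0 hjD)) (hconvX _ (henX j hj0 hjD)) h0F' hseg
      exact hmemvs _ hmem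
  -- the facet
  set F : Set (EuclideanSpace ℝ (Fin d)) :=
    {x | x ∈ convexHull ℝ (X : Set (EuclideanSpace ℝ (Fin d))) ∧ f x = 0} with hF
  have hFext : IsExtreme ℝ (convexHull ℝ (X : Set (EuclideanSpace ℝ (Fin d)))) F := by
    rw [hF, hf]
    exact extreme_ker d _ (coordLM d iD) (by rw [← hf]; exact hfX)
  have h0F : (0 : EuclideanSpace ℝ (Fin d)) ∈ F := ⟨h0conv, by rw [hfapp]; rfl⟩
  have hFspan : vectorSpan ℝ F = LinearMap.ker f := by
    refine le_antisymm ?_ (hvspan F hFext h0F)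
    rw [vectorSpan_def]
    refine Submodule.span_le.2 ?_
    rintro v hv
    obtain ⟨x, hxF, y, hyF, rfl⟩ := Set.mem_vsub.1 hv
    rw [SetLike.mem_coe, LinearMap.mem_ker, vsub_eq_sub, map_sub, hxF.2, hyF.2, sub_zero]
  have hbal : IsBBalanced d (d - 1) X := by
    constructor
    · exact ⟨F, hFext, h0F, by rw [hFspan, hf, finrank_ker_coord d (by omega) iD]⟩
    · intro F' hext h0F'
      have h := Submodule.finrank_mono (hvspan F' hext h0F')
      rwa [hf, finrank_ker_coord d (by omega) iD] at h
  -- dynamics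
  set K : ℕ := n^2 with hK
  set N : ℕ := 2*K + 1 with hN
  set pat : ℕ → EuclideanSpace ℝ (Fin d) :=
    fun i => if i = 0 then x0 else if i % 2 = 1 then xt else p with hpat
  have hXne : X.Nonempty := ⟨p, hpX⟩
  have hnxt : ∀ w : EuclideanSpace ℝ (Fin d), ∃ χ ∈ X, ∀ x ∈ X, ⟪χ, w⟫ ≤ ⟪x, w⟫ :=
    fun w => X.exists_min_image (fun x => ⟪x, w⟫) hXne
  choose nxt hnxtX hnxtmin using hnxt
  set u : ℕ → EuclideanSpace ℝ (Fin d) :=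
    fun i => Nat.rec (motive := fun _ => EuclideanSpace ℝ (Fin d)) 0
      (fun i ui => ui + (if i < N then pat i else nxt ui)) i with hu
  have hu0 : u 0 = 0 := rfl
  have hustep : ∀ i, u (i+1) = u i + (if i < N then pat i else nxt (u i)) := fun _ => rfl
  -- inner product values against plane vectors
  have hcoP : ∀ (A B : ℝ) (k : Fin d), (A • p + B • q) k =
      A * (if k = i0 then (1:ℝ) else 0) + B * (if k = iD then (1:ℝ) else 0) := by
    intro A B k; rw [hp, hq]; exact hco2 A B i0 iD k
  have hvP : ∀ A B : ℝ, ⟪p, A • p + B • q⟫ = A := by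
    intro A B; rw [hp, hip, hcoP, if_pos rfl, if_neg h0D]; ring
  have hvQ : ∀ A B : ℝ, ⟪q, A • p + B • q⟫ = B := by
    intro A B; rw [hq, hip, hcoP, if_pos rfl, if_neg (Ne.symm h0D)]; ring
  have hvNp : ∀ A B : ℝ, ⟪np, A • p + B • q⟫ = -(3/5) * A := by
    intro A B
    rw [hnp, hip2, hcoP, hcoP, if_pos rfl, if_neg h0D, if_neg (Ne.symm h01), if_neg h1D]; ring
  have hvNm : ∀ A B : ℝ, ⟪nm, A • p + B • q⟫ = -(3/5) * A := by
    intro A B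
    rw [hnm, hip2, hcoP, hcoP, if_pos rfl, if_neg h0D, if_neg (Ne.symm h01), if_neg h1D]; ring
  have hvXt : ∀ A B : ℝ, ⟪xt, A • p + B • q⟫ = -c * A + s * B := by
    intro A B
    rw [hxt, hip2, hcoP, hcoP, if_pos rfl, if_neg h0D, if_neg (Ne.symm h0D), if_pos rfl]; ring
  have hvX0 : ∀ A B : ℝ, ⟪x0, A • p + B • q⟫ = (3/5) * A + (4/5) * B := by
    intro A B
    rw [hx0, hip2, hcoP, hcoP, if_pos rfl, if_neg h0D, if_neg (Ne.symm h0D), if_pos rfl]; ring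
  have hvE : ∀ (A B : ℝ) (j : Fin d), j ≠ i0 → j ≠ iD → ⟪e j, A • p + B • q⟫ = 0 := by
    intro A B j hj0 hjD
    rw [hip, hcoP, if_neg hj0, if_neg hjD]; ring
  have hvEn : ∀ (A B : ℝ) (j : Fin d), j ≠ i0 → j ≠ iD → ⟪-e j, A • p + B • q⟫ = 0 := by
    intro A B j hj0 hjD
    rw [inner_neg_left, hvE A B j hj0 hjD, neg_zero]
  -- minimality of xt at odd states
  have hminXt : ∀ A B : ℝ, 3/5 ≤ A → 0 ≤ B → s * B ≤ (c - 3/5) * A →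
      ∀ x ∈ X, ⟪xt, A • p + B • q⟫ ≤ ⟪x, A • p + B • q⟫ := by
    intro A B hA hB hKey x hx
    have hxtv := hvXt A B
    have hle0 : -c * A + s * B ≤ -(3/5) * A := by nlinarith
    have hle1 : -(3/5) * A ≤ 0 := by nlinarith
    rcases (hmemX x).1 hx with rfl | rfl | rfl | rfl | rfl | ⟨j, hj, rfl⟩ | ⟨j, hj, rfl⟩
    · rw [hxtv, hvP]; nlinarith
    · rw [hxtv, hvNp]; linarith
    · rw [hxtv, hvNm]; linarith
    · rw [hxtv]
    · rw [hxtv, hvX0]; nlinarith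
    · rw [hxtv, hvE A B j hj.1 hj.2]; linarith
    · rw [hxtv, hvEn A B j hj.1 hj.2]; linarith
  -- minimality of p at even states
  have hminP : ∀ A B : ℝ, A ≤ 0 → 0 ≤ B →
      ∀ x ∈ X, ⟪p, A • p + B • q⟫ ≤ ⟪x, A • p + B • q⟫ := by
    intro A B hA hB x hx
    have hpv := hvP A B
    rcases (hmemX x).1 hx with rfl | rfl | rfl | rfl | rfl | ⟨j, hj, rfl⟩ | ⟨j, hj, rfl⟩
    · rw [hpv]
    · rw [hpv, hvNp]; linarith
    · rw [hpv, hvNm]; linarith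
    · rw [hpv, hvXt]; nlinarith
    · rw [hpv, hvX0]; nlinarith
    · rw [hpv, hvE A B j hj.1 hj.2]; linarith
    · rw [hpv, hvEn A B j hj.1 hj.2]; linarith
  -- closed form of the trajectory
  have hform : ∀ k, k ≤ K →
      (u (2*k+1) = (3/5 + (k:ℝ)*(1-c)) • p + (4/5 + (k:ℝ)*s) • q ∧
       (1 ≤ k → u (2*k) = (3/5 + ((k:ℝ)-1)*(1-c) - c) • p + (4/5 + (k:ℝ)*s) • q)) := by
    intro k
    induction k with
    | zero =>
      intro _
      constructor
      · have e0 : 2*0+1 = 1 := by norm_num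
        have h1 : u 1 = u 0 + (if 0 < N then pat 0 else nxt (u 0)) := hustep 0
        rw [if_pos (by omega)] at h1
        have h2 : pat 0 = x0 := by simp [hpat]
        rw [e0, h1, h2, hu0, hx0, hp, hq]
        push_cast
        module
      · intro h; omega
    | succ k ih =>
      intro hk1
      have hk : k ≤ K := by omega
      obtain ⟨iho, _⟩ := ih hk
      have heven : u (2*(k+1)) = (3/5 + ((k:ℝ)+1-1)*(1-c) - c) • p + (4/5 + ((k:ℝ)+1)*s) • q := by
        have e1 : 2*(k+1) = (2*k+1)+1 := by ring
        have h1 := hustep (2*k+1)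
        rw [if_pos (show 2*k+1 < N by omega)] at h1
        have h2 : pat (2*k+1) = xt := by
          have hne : 2*k+1 ≠ 0 := by omega
          have hmod : (2*k+1) % 2 = 1 := by omega
          simp only [hpat]
          rw [if_neg hne, if_pos hmod]
        rw [e1, h1, h2, iho, hxt, hp, hq]
        module
      constructor
      · have h1 := hustep (2*(k+1))
        rw [if_pos (show 2*(k+1) < N by omega)] at h1
        have h2 : pat (2*(k+1)) = p := by
          have hne : 2*(k+1) ≠ 0 := by omega
          have hmod : ¬ ((2*(k+1)) % 2 = 1) := by omega
          simp only [hpat]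
          rw [if_neg hne, if_neg hmod]
        rw [h1, h2, heven, hp, hq]
        push_cast
        module
      · intro _
        rw [heven, hp, hq]
        push_cast
        module
  -- validity of every step
  have hvalid : ∀ i, ∃ χ ∈ X, (∀ x ∈ X, ⟪χ, u i⟫ ≤ ⟪x, u i⟫) ∧ u (i + 1) = u i + χ := by
    intro i
    by_cases hiN : i < N
    · by_cases hi0' : i = 0
      · subst hi0'
        refine ⟨x0, hx0X, ?_, ?_⟩
        · intro x hx; rw [hu0]; simp
        · have h1 := hustep 0
          rw [if_pos hiN] at h1
          have h2 : pat 0 = x0 := by simp [hpat]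
          rw [h1, h2]
      · rcases Nat.even_or_odd i with ⟨k, hk2⟩ | ⟨k, hk2⟩
        · -- even: i = 2k, 1 ≤ k ≤ K, χ = p
          have hik : i = 2*k := by omega
          have hk1 : 1 ≤ k := by omega
          have hkK : k ≤ K := by omega
          have hform' := (hform k hkK).2 hk1
          rw [hik]
          refine ⟨p, hpX, ?_, ?_⟩
          · rw [hform']
            apply hminP
            · -- A ≤ 0
              have hkr : (k:ℝ) - 1 ≤ (n:ℝ)^2 - 1 := by
                have : (k:ℝ) ≤ ((K:ℕ):ℝ) := by exact_mod_cast hkK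
                rw [hK] at this; push_cast at this; linarith
              have hkr0 : (0:ℝ) ≤ (k:ℝ) - 1 := by
                have : (1:ℝ) ≤ (k:ℝ) := by exact_mod_cast hk1
                linarith
              have hprod := mul_le_mul_of_nonneg_right hkr (by linarith : (0:ℝ) ≤ 1 - c)
              linarith
            · -- 0 ≤ B
              have : (0:ℝ) ≤ (k:ℝ) := Nat.cast_nonneg k
              nlinarith
          · have h1 := hustep (2*k)
            rw [if_pos (show 2*k < N by omega)] at h1
            have h2 : pat (2*k) = p := by
              have hne : 2*k ≠ 0 := by omega
              have hmod : ¬ ((2*k) % 2 = 1) := by omega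
              simp only [hpat]
              rw [if_neg hne, if_neg hmod]
            rw [h1, h2]
        · -- odd: i = 2k+1, k ≤ K - 1, χ = xt
          have hik : i = 2*k+1 := by omega
          have hkK : k ≤ K := by omega
          have hform' := (hform k hkK).1
          rw [hik]
          refine ⟨xt, hxtX, ?_, ?_⟩
          · rw [hform']
            apply hminXt
            · have : (0:ℝ) ≤ (k:ℝ) := Nat.cast_nonneg k
              nlinarith
            · have : (0:ℝ) ≤ (k:ℝ) := Nat.cast_nonneg k
              nlinarith
            · -- key inequality
              have hkr : (k:ℝ) ≤ (n:ℝ)^2 := by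
                have : (k:ℝ) ≤ ((K:ℕ):ℝ) := by exact_mod_cast hkK
                rw [hK] at this; push_cast at this; linarith
              have hk0 : (0:ℝ) ≤ (k:ℝ) := Nat.cast_nonneg k
              have hp1 := mul_le_mul_of_nonneg_right hkr (mul_pos hs0 hs0).le
              have hstep1 : s * (4/5 + (k:ℝ)*s) ≤ s * (4/5 + (n:ℝ)^2*s) := by nlinarith [hp1]
              have h39 : (0:ℝ) ≤ c - 3/5 := by linarith
              have hprod : (0:ℝ) ≤ (c - 3/5) * ((k:ℝ)*(1-c)) :=
                mul_nonneg h39 (mul_nonneg hk0 (by linarith))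
              have hstep2 : (c - 3/5) * (3/5) ≤ (c - 3/5) * (3/5 + (k:ℝ)*(1-c)) := by nlinarith [hprod]
              linarith
          · have h1 := hustep (2*k+1)
            rw [if_pos (show 2*k+1 < N by omega)] at h1
            have h2 : pat (2*k+1) = xt := by
              have hne : 2*k+1 ≠ 0 := by omega
              have hmod : (2*k+1) % 2 = 1 := by omega
              simp only [hpat]
              rw [if_neg hne, if_pos hmod]
            rw [h1, h2]
    · refine ⟨nxt (u i), hnxtX _, hnxtmin _, ?_⟩
      have h1 := hustep i
      rw [if_neg hiN] at h1
      exact h1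
  -- reaching √M
  have hreach : ∃ i, Real.sqrt M ≤ ‖u i‖ := by
    refine ⟨2*K+1, ?_⟩
    have hform' := (hform K le_rfl).1
    have hqn : ‖q‖ = 1 := by
      refine hnorm1 q ?_
      rw [hq, hip, hea]; simp
    have hqv : ⟪q, u (2*K+1)⟫ = 4/5 + (K:ℝ)*s := by rw [hform', hvQ]
    have hKs : Real.sqrt M ≤ 4/5 + (K:ℝ)*s := by
      rw [hK]; push_cast; exact hM'
    have h := real_inner_le_norm q (u (2*K+1))
    rw [hqn, one_mul, hqv] at h
    linarith
  exact ⟨X, hunit, hbal, u, hu0, hvalid, hreach⟩
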